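/- Let n ≥ 2 be an integer. For every rational number ε > 0 there exist positive integers c_1 ≤ c_2 ≤ … ≤ c_{n+1} with gcd(c_1, …, c_{n+1}) = 1 such that 0 < (gcd(c_n, c_{n+1}) / (c_n · c_{n+1})) · (c_1 + ⋯ + c_{n+1}) < ε. In fact, the weights c_1 = ⋯ = c_{n−1} = 1, c_n = l − 1, c_{n+1} = l give the value (n + 2l − 2)/(l(l − 1)), which tends to 0 as l → ∞. -/

import Mathlib

lemma partB (n : ℕ) (hn : 2 ≤ n) (l : ℕ) (hl : 2 ≤ l) (c : ℕ → ℕ)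
    (h1 : ∀ i, 1 ≤ i → i ≤ n - 1 → c i = 1) (hcn : c n = l - 1) (hcn1 : c (n + 1) = l) :
    ((Nat.gcd (c n) (c (n + 1)) : ℚ) / ((c n : ℚ) * (c (n + 1) : ℚ))) *
        (∑ i ∈ Finset.Icc 1 (n + 1), (c i : ℚ)) =
      ((n : ℚ) + 2 * (l : ℚ) - 2) / ((l : ℚ) * ((l : ℚ) - 1)) := by
  have hn1 : 1 ≤ n := le_trans (by norm_num) hn
  have hsum : (∑ i ∈ Finset.Icc 1 (n + 1), (c i : ℚ))
      = ((n : ℚ) - 1) + ((l : ℚ) - 1) + (l : ℚ) := by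
    rw [← Finset.Ico_add_one_right_eq_Icc, Finset.sum_Ico_succ_top (by omega),
      Finset.sum_Ico_succ_top (by omega)]
    have : ∑ i ∈ Finset.Ico 1 n, (c i : ℚ) = ∑ i ∈ Finset.Ico 1 n, (1 : ℚ) := by
      apply Finset.sum_congr rfl
      intro i hi
      simp only [Finset.mem_Ico] at hi
      rw [h1 i hi.1 (by omega)]
      norm_num
    rw [this, Finset.sum_const, hcn, hcn1, Nat.card_Ico, nsmul_eq_mul, Nat.cast_sub hn1,
      Nat.cast_sub (by omega : 1 ≤ l)]
    push_cast
    ring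
  have hgcd : Nat.gcd (c n) (c (n + 1)) = 1 := by
    rw [hcn, hcn1]
    have h : Nat.gcd (l - 1) ((l - 1) + 1) = 1 := by simp [Nat.gcd_comm]
    rw [show l = (l - 1) + 1 from by omega]
    exact h
  rw [hgcd, hsum, hcn, hcn1]
  have hl1 : ((l : ℚ)) ≠ 0 := by positivity
  have hl2 : ((l : ℚ)) - 1 ≠ 0 := by
    have : (2 : ℚ) ≤ (l : ℚ) := by exact_mod_cast hl
    linarith
  rw [Nat.cast_sub (by omega : 1 ≤ l)]
  push_cast
  field_simp
  ring

lemma partC (n : ℕ) :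
    Filter.Tendsto (fun l : ℕ => ((n : ℚ) + 2 * (l : ℚ) - 2) / ((l : ℚ) * ((l : ℚ) - 1)))
      Filter.atTop (nhds 0) := by
  have hB : Filter.Tendsto (fun l : ℕ => ((l : ℚ) - 1)) Filter.atTop Filter.atTop := by
    simp only [sub_eq_add_neg]
    exact Filter.tendsto_atTop_add_const_right _ _ tendsto_natCast_atTop_atTop
  have hA : Filter.Tendsto (fun l : ℕ => ((l : ℚ) * ((l : ℚ) - 1))) Filter.atTop Filter.atTop :=
    Filter.Tendsto.atTop_mul_atTop₀ tendsto_natCast_atTop_atTop hB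
  have h1 : Filter.Tendsto (fun l : ℕ => ((n : ℚ) - 2) * ((l : ℚ) * ((l : ℚ) - 1))⁻¹ +
      2 * ((l : ℚ) - 1)⁻¹) Filter.atTop (nhds 0) := by
    have := (hA.inv_tendsto_atTop.const_mul ((n : ℚ) - 2)).add
      (hB.inv_tendsto_atTop.const_mul (2 : ℚ))
    simpa using this
  apply h1.congr'
  filter_upwards [Filter.eventually_ge_atTop 2] with l hl
  have hl1 : ((l : ℚ)) ≠ 0 := by positivity
  have hl2 : ((l : ℚ)) - 1 ≠ 0 := by
    have : (2 : ℚ) ≤ (l : ℚ) := by exact_mod_cast hl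
    linarith
  field_simp
  ring

theorem wps_degree_arbitrarily_small (n : ℕ) (hn : 2 ≤ n) :
    (∀ ε : ℚ, 0 < ε → ∃ c : ℕ → ℕ,
      (∀ i ∈ Finset.Icc 1 (n + 1), 0 < c i) ∧
      (∀ i j, 1 ≤ i → i ≤ j → j ≤ n + 1 → c i ≤ c j) ∧
      (Finset.Icc 1 (n + 1)).gcd c = 1 ∧
      0 < ((Nat.gcd (c n) (c (n + 1)) : ℚ) / ((c n : ℚ) * (c (n + 1) : ℚ))) *
          (∑ i ∈ Finset.Icc 1 (n + 1), (c i : ℚ)) ∧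
      ((Nat.gcd (c n) (c (n + 1)) : ℚ) / ((c n : ℚ) * (c (n + 1) : ℚ))) *
          (∑ i ∈ Finset.Icc 1 (n + 1), (c i : ℚ)) < ε) ∧
    (∀ l : ℕ, 2 ≤ l → ∀ c : ℕ → ℕ,
      (∀ i, 1 ≤ i → i ≤ n - 1 → c i = 1) → c n = l - 1 → c (n + 1) = l →
      ((Nat.gcd (c n) (c (n + 1)) : ℚ) / ((c n : ℚ) * (c (n + 1) : ℚ))) *
          (∑ i ∈ Finset.Icc 1 (n + 1), (c i : ℚ)) =
        ((n : ℚ) + 2 * (l : ℚ) - 2) / ((l : ℚ) * ((l : ℚ) - 1))) ∧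
    Filter.Tendsto (fun l : ℕ => ((n : ℚ) + 2 * (l : ℚ) - 2) / ((l : ℚ) * ((l : ℚ) - 1)))
      Filter.atTop (nhds 0) := by
  refine ⟨?_, fun l hl c h1 h2 h3 => partB n hn l hl c h1 h2 h3, partC n⟩
  intro ε hε
  have hev : ∀ᶠ l : ℕ in Filter.atTop,
      ((n : ℚ) + 2 * (l : ℚ) - 2) / ((l : ℚ) * ((l : ℚ) - 1)) < ε :=
    (partC n).eventually (gt_mem_nhds hε)
  obtain ⟨l, hl⟩ := ((hev.and (Filter.eventually_ge_atTop 2)).exists)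
  obtain ⟨hlε, hl2⟩ := hl
  set c : ℕ → ℕ := fun i => if i = n + 1 then l else if i = n then l - 1 else 1 with hc
  have hcn : c n = l - 1 := by simp [hc]
  have hcn1 : c (n + 1) = l := by simp [hc]
  have h1 : ∀ i, 1 ≤ i → i ≤ n - 1 → c i = 1 := by
    intro i hi1 hi2
    simp only [hc]
    rw [if_neg (by omega), if_neg (by omega)]
  have hval := partB n hn l hl2 c h1 hcn hcn1
  refine ⟨c, ?_, ?_, ?_, ?_, ?_⟩
  · intro i hi
    simp only [hc]
    split <;> try omega
    split <;> omega
  · intro i j hi hij hj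
    simp only [hc]
    split <;> split <;> try omega
    all_goals (split <;> try omega)
    all_goals (try split) <;> omega
  · have hmem : 1 ∈ Finset.Icc 1 (n + 1) := by simp
    have hd := Finset.gcd_dvd hmem (f := c)
    have hc1 : c 1 = 1 := h1 1 le_rfl (by omega)
    rw [hc1] at hd
    exact Nat.dvd_one.mp hd
  · rw [hval]
    apply div_pos
    · have : (2 : ℚ) ≤ (l : ℚ) := by exact_mod_cast hl2
      have hn' : (2 : ℚ) ≤ (n : ℚ) := by exact_mod_cast hn
      linarith
    · have : (2 : ℚ) ≤ (l : ℚ) := by exact_mod_cast hl2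
      nlinarith
  · rw [hval]; exact hlε
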